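/- Let A = k⟨X⟩/(w₁,…,w_t) be a monomial non-unital algebra graded by the free monoid ⟨X⟩, with noncommutative Hilbert series R = 1 + Σ_{m} dim(A_m)·m (sum over nonempty monomials m). Then every coefficient of the formal inverse series R^{−1} in noncommuting variables X lies in {−1, 0, 1}. -/

import Mathlib

/-- `u` is a nonzero monomial of the monomial algebra `k⟨X⟩/(R)`. -/
def IsNZ {X : Type*} (R : Finset (List X)) (u : List X) : Prop :=
  u ≠ [] ∧ ∀ r ∈ R, ¬ r <:+: u

open scoped Classical in
/-- The coefficient of the noncommutative Hilbert series `R = 1 + Σ_m dim(A_m)·m` of the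
monomial algebra `A = k⟨X⟩/(R)`: `dim A_m = 1` iff `m` is a nonzero monomial of `A`. -/
noncomputable def hilbCoeff {X : Type*} (R : Finset (List X)) (m : List X) : ℤ :=
  if m = [] then 1 else if IsNZ R m then 1 else 0

open scoped Classical

/-- longest R-free prefix length -/
noncomputable def jj {X : Type*} (R : Finset (List X)) (m : List X) : ℕ :=
  Nat.findGreatest (fun i => ∀ r ∈ R, ¬ r <:+: m.take i) m.length

noncomputable def Qf {X : Type*} (R : Finset (List X)) (m : List X) : ℤ :=
  if h : m = [] then 1
  else if (∀ r ∈ R, ¬ r <:+: m) then 0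
  else Qf R (m.drop (jj R m + 1))
termination_by m.length
decreasing_by
  simp only [List.length_drop]
  exact Nat.sub_lt (List.length_pos_iff.mpr h) (Nat.succ_pos _)

theorem Qf_vals_aux {X : Type*} (R : Finset (List X)) :
    ∀ n (m : List X), m.length ≤ n → Qf R m = 0 ∨ Qf R m = 1 := by
  intro n
  induction n with
  | zero =>
    intro m hm
    have : m = [] := List.eq_nil_of_length_eq_zero (Nat.le_zero.mp hm)
    subst this
    right; rw [Qf]; simp
  | succ n ih =>
    intro m hm
    rw [Qf]
    by_cases h : m = []
    · right; simp [h]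
    · by_cases hf : ∀ r ∈ R, ¬ r <:+: m
      · left; rw [dif_neg h, if_pos hf]
      · rw [dif_neg h, if_neg hf]
        apply ih
        have h1 : (m.drop (jj R m + 1)).length < m.length := by
          simp only [List.length_drop]
          exact Nat.sub_lt (List.length_pos_iff.mpr h) (Nat.succ_pos _)
        omega

theorem Qf_vals {X : Type*} (R : Finset (List X)) (m : List X) :
    Qf R m = 0 ∨ Qf R m = 1 :=
  Qf_vals_aux R m.length m le_rfl

theorem free_take_of_le {X : Type*} (R : Finset (List X)) (m : List X) {i i' : ℕ}
    (hii : i ≤ i') (h : ∀ r ∈ R, ¬ r <:+: m.take i') : ∀ r ∈ R, ¬ r <:+: m.take i := by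
  intro r hr hinf
  refine h r hr ?_
  have hpre : m.take i <+: m.take i' := by
    have : (m.take i').take i = m.take i := by
      rw [List.take_take, min_eq_left hii]
    rw [← this]
    exact List.take_prefix _ _
  exact hinf.trans hpre.isInfix

theorem jj_le {X : Type*} (R : Finset (List X)) (m : List X) : jj R m ≤ m.length :=
  Nat.findGreatest_le _

theorem free_take_one {X : Type*} (R : Finset (List X)) (hdeg : ∀ r ∈ R, 2 ≤ r.length)
    (m : List X) : ∀ r ∈ R, ¬ r <:+: m.take 1 := by
  intro r hr hinf
  have h1 := hinf.length_le
  simp only [List.length_take] at h1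
  have h2 := hdeg r hr
  omega

theorem one_le_jj {X : Type*} (R : Finset (List X)) (hdeg : ∀ r ∈ R, 2 ≤ r.length)
    (m : List X) (hm : m ≠ []) : 1 ≤ jj R m :=
  Nat.le_findGreatest (List.length_pos_iff.mpr hm) (free_take_one R hdeg m)

theorem free_iff_le_jj {X : Type*} (R : Finset (List X)) (hdeg : ∀ r ∈ R, 2 ≤ r.length)
    (m : List X) {i : ℕ} (h1 : 1 ≤ i) (h2 : i ≤ m.length) :
    (∀ r ∈ R, ¬ r <:+: m.take i) ↔ i ≤ jj R m := by
  constructor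
  · intro hfree
    exact Nat.le_findGreatest h2 hfree
  · intro hle
    have hspec := Nat.findGreatest_spec (P := fun i => ∀ r ∈ R, ¬ r <:+: m.take i)
      (le_trans h1 h2) (free_take_one R hdeg m)
    exact free_take_of_le R m hle hspec

theorem stmt8 {X : Type*} (R : Finset (List X))
    (hdeg : ∀ r ∈ R, 2 ≤ r.length)
    (hanti : ∀ r ∈ R, ∀ s ∈ R, r <:+: s → r = s) :
    ∃ S : List X → ℤ,
      (∀ m : List X,
        (∑ i ∈ Finset.range (m.length + 1), hilbCoeff R (m.take i) * S (m.drop i)) =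
          if m = [] then 1 else 0) ∧
      (∀ m : List X, S m = -1 ∨ S m = 0 ∨ S m = 1) := by
  refine ⟨fun m => if m = [] then 1 else Qf R m - Qf R m.tail, ?_, ?_⟩
  · intro m
    by_cases hm : m = []
    · subst hm; simp [hilbCoeff]
    · rw [if_neg hm]
      -- Step 1: reduce to a sum over range (jj R m + 1)
      have hco : ∀ i ∈ Finset.range (m.length + 1),
          hilbCoeff R (m.take i) *
            (if m.drop i = [] then (1 : ℤ) else Qf R (m.drop i) - Qf R (m.drop i).tail) =
          if i ≤ jj R m then
            (if m.drop i = [] then (1 : ℤ) else Qf R (m.drop i) - Qf R (m.drop i).tail)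
          else 0 := by
        intro i hi
        rw [Finset.mem_range] at hi
        rcases Nat.eq_zero_or_pos i with h0 | h1
        · subst h0
          rw [if_pos (Nat.zero_le _)]
          simp [hilbCoeff]
        · have hil : i ≤ m.length := by omega
          have hne : m.take i ≠ [] := by
            intro h
            have := congrArg List.length h
            simp only [List.length_take, List.length_nil] at this
            omega
          by_cases hle : i ≤ jj R m
          · rw [if_pos hle]
            have hfree := (free_iff_le_jj R hdeg m h1 hil).mpr hle
            rw [hilbCoeff, if_neg hne, if_pos ⟨hne, hfree⟩, one_mul]
          · rw [if_neg hle]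
            have hnfree : ¬ IsNZ R (m.take i) := by
              intro ⟨_, hfree⟩
              exact hle ((free_iff_le_jj R hdeg m h1 hil).mp hfree)
            rw [hilbCoeff, if_neg hne, if_neg hnfree, zero_mul]
      rw [Finset.sum_congr rfl hco, ← Finset.sum_filter]
      have hfil : (Finset.range (m.length + 1)).filter (fun i => i ≤ jj R m)
          = Finset.range (jj R m + 1) := by
        ext i
        simp only [Finset.mem_filter, Finset.mem_range]
        have := jj_le R m
        omega
      rw [hfil]
      -- Step 2: telescoping
      by_cases hf : ∀ r ∈ R, ¬ r <:+: m
      · -- m is R-free: jj = m.length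
        have hjj : jj R m = m.length := le_antisymm (jj_le R m)
          (Nat.le_findGreatest le_rfl (by rwa [List.take_length]))
        rw [hjj, Finset.sum_range_succ]
        have hlast : m.drop m.length = [] := List.drop_length
        rw [hlast, if_pos rfl]
        have hmid : ∀ i ∈ Finset.range m.length,
            (if m.drop i = [] then (1 : ℤ) else Qf R (m.drop i) - Qf R (m.drop i).tail)
            = Qf R (m.drop i) - Qf R (m.drop (i + 1)) := by
          intro i hi
          rw [Finset.mem_range] at hi
          have hne : m.drop i ≠ [] := by
            intro h
            have := congrArg List.length h
            simp only [List.length_drop, List.length_nil] at this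
            omega
          rw [if_neg hne, List.tail_drop]
        rw [Finset.sum_congr rfl hmid, Finset.sum_range_sub']
        have hQ : Qf R m = 0 := by rw [Qf, dif_neg hm, if_pos hf]
        rw [List.drop_zero, List.drop_length, hQ]
        have hQnil : Qf R ([] : List X) = 1 := by rw [Qf]; simp
        rw [hQnil]; ring
      · -- m contains a relation: jj < m.length
        have hlt : jj R m < m.length := by
          rcases Nat.lt_or_ge (jj R m) m.length with h | h
          · exact h
          · exfalso
            have hjj : jj R m = m.length := le_antisymm (jj_le R m) h
            have h1 : 1 ≤ m.length := List.length_pos_iff.mpr hm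
            have := (free_iff_le_jj R hdeg m h1 le_rfl).mpr (by omega)
            rw [List.take_length] at this
            exact hf this
        have hmid : ∀ i ∈ Finset.range (jj R m + 1),
            (if m.drop i = [] then (1 : ℤ) else Qf R (m.drop i) - Qf R (m.drop i).tail)
            = Qf R (m.drop i) - Qf R (m.drop (i + 1)) := by
          intro i hi
          rw [Finset.mem_range] at hi
          have hne : m.drop i ≠ [] := by
            intro h
            have := congrArg List.length h
            simp only [List.length_drop, List.length_nil] at this
            omega
          rw [if_neg hne, List.tail_drop]
        rw [Finset.sum_congr rfl hmid, Finset.sum_range_sub']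
        have hQ : Qf R m = Qf R (m.drop (jj R m + 1)) := by
          rw [Qf, dif_neg hm, if_neg hf]
        rw [List.drop_zero, ← hQ]; ring
  · intro m
    dsimp only
    by_cases hm : m = []
    · right; right; rw [if_pos hm]
    · rw [if_neg hm]
      rcases Qf_vals R m with h1 | h1 <;> rcases Qf_vals R m.tail with h2 | h2 <;>
        rw [h1, h2] <;> norm_num
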